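/- For p ≥ 0 and |x| < 1, ∑_{l=0}^∞ (l+r)_{p,λ} x^l = (1/(1-x)) F_{p,λ}( x/(1-x) | r ), where F_{p,λ}(y|r) = ∑_{k=0}^p k! {p+r brace k+r}_{r,λ} y^k. -/

import Mathlib

/-- Generalized falling factorial `(y)_{m,λ} = y(y-λ)⋯(y-(m-1)λ)`. -/
noncomputable def degFallFact (y l : ℝ) (m : ℕ) : ℝ :=
  ∏ i ∈ Finset.range m, (y - i * l)

lemma hasSum_prod_range_mul_geometric (k : ℕ) {x : ℝ} (hx : |x| < 1) :
    HasSum (fun n : ℕ => (∏ i ∈ Finset.range k, ((n : ℝ) - i)) * x ^ n)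
      ((k.factorial : ℝ) * (x ^ k / (1 - x) ^ (k + 1))) := by
  have hx' : ‖x‖ < 1 := by simpa [Real.norm_eq_abs] using hx
  have h1 : HasSum (fun n : ℕ => (∏ i ∈ Finset.range k, (((n + k : ℕ) : ℝ) - i)) * x ^ (n + k))
      ((k.factorial : ℝ) * (x ^ k / (1 - x) ^ (k + 1))) := by
    have hc := (hasSum_choose_mul_geometric_of_norm_lt_one k hx').mul_left
      ((k.factorial : ℝ) * x ^ k)
    have hfun : (fun n : ℕ => (∏ i ∈ Finset.range k, (((n + k : ℕ) : ℝ) - i)) * x ^ (n + k)) =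
        fun n : ℕ => (k.factorial : ℝ) * x ^ k * (((n + k).choose k : ℝ) * x ^ n) := by
      funext n
      have hprod : ∏ i ∈ Finset.range k, (((n + k : ℕ) : ℝ) - i) = ((n + k).descFactorial k : ℝ) := by
        rw [Nat.descFactorial_eq_prod_range, Nat.cast_prod]
        refine Finset.prod_congr rfl fun i hi => ?_
        rw [Nat.cast_sub (by simp at hi; omega)]
      rw [hprod, Nat.descFactorial_eq_factorial_mul_choose]
      push_cast
      ring
    rw [hfun]
    convert hc using 1
    · rfl
    · ring
  have h2 := (hasSum_nat_add_iff (f := fun n : ℕ => (∏ i ∈ Finset.range k, ((n : ℝ) - i)) * x ^ n)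
      k).1 (by exact_mod_cast h1)
  have hz : ∑ i ∈ Finset.range k, (∏ j ∈ Finset.range k, ((i : ℝ) - j)) * x ^ i = 0 := by
    refine Finset.sum_eq_zero fun i hi => ?_
    have : (∏ j ∈ Finset.range k, ((i : ℝ) - j)) = 0 := Finset.prod_eq_zero hi (by simp)
    simp [this]
  rw [hz, add_zero] at h2
  exact h2

/-- for `|x| < 1`,
`∑_{l≥0} (l+r)_{p,λ} x^l = (1/(1-x)) F_{p,λ}(x/(1-x) | r)`, where
`F_{p,λ}(y|r) = ∑_{k=0}^p k! {p+r brace k+r}_{r,λ} y^k`. -/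
theorem tsum_degFallFact_eq_fubini (l : ℝ) (p r : ℕ) (S : ℕ → ℕ → ℝ)
    (hS : ∀ (m : ℕ) (x : ℝ), degFallFact (x + r) l m =
      ∑ k ∈ Finset.range (m + 1), S m k * ∏ i ∈ Finset.range k, (x - i))
    (x : ℝ) (hx : |x| < 1) :
    HasSum (fun n : ℕ => degFallFact (n + r) l p * x ^ n)
      ((1 / (1 - x)) * ∑ k ∈ Finset.range (p + 1),
        (k.factorial : ℝ) * S p k * (x / (1 - x)) ^ k) := by
  have hx1 : (1 : ℝ) - x ≠ 0 := by
    intro h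
    have : x = 1 := by linarith
    rw [this] at hx; norm_num at hx
  have key : HasSum (fun n : ℕ => ∑ k ∈ Finset.range (p + 1),
      S p k * ((∏ i ∈ Finset.range k, ((n : ℝ) - i)) * x ^ n))
      (∑ k ∈ Finset.range (p + 1),
        S p k * ((k.factorial : ℝ) * (x ^ k / (1 - x) ^ (k + 1)))) :=
    hasSum_sum fun k _ => (hasSum_prod_range_mul_geometric k hx).mul_left (S p k)
  have heq : (fun n : ℕ => degFallFact (n + r) l p * x ^ n) =
      fun n : ℕ => ∑ k ∈ Finset.range (p + 1),
        S p k * ((∏ i ∈ Finset.range k, ((n : ℝ) - i)) * x ^ n) := by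
    funext n
    rw [hS p n, Finset.sum_mul]
    exact Finset.sum_congr rfl fun k _ => by ring
  rw [heq]
  convert key using 1
  rw [Finset.mul_sum]
  refine Finset.sum_congr rfl fun k _ => ?_
  rw [div_pow]
  field_simp
  ring
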